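/- Suppose each algorithm A in a class 𝒜 has a reward function R_A : {1,...,N} → ℝ that is either strictly increasing or constant. If two platforms choose algorithms A₁, A₂ with max(R_{A₁}(N), R_{A₂}(N)) < sup_{A ∈ 𝒜} R_A(1), and the supremum is attained by some A* ∈ 𝒜, then (A₁, A₂) is not a Nash equilibrium of the platform game where each platform's utility is the minimum, over pure user equilibria, of the number of users it receives. -/

import Mathlib

open Finset

/-- Number of users choosing platform 1 (encoded as `false`). -/
def count1 {N : ℕ} (p : Fin N → Bool) : ℕ := (univ.filter fun i => p i = false).card

/-- Number of users choosing platform 2 (encoded as `true`). -/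
def count2 {N : ℕ} (p : Fin N → Bool) : ℕ := (univ.filter fun i => p i = true).card

/-- Utility of user `i`: reward of their platform evaluated at that platform's user count. -/
def util {N : ℕ} (R1 R2 : ℕ → ℝ) (p : Fin N → Bool) (i : Fin N) : ℝ :=
  if p i then R2 (count2 p) else R1 (count1 p)

/-- Pure-strategy Nash equilibrium of the user platform-choice game. -/
def userNash {N : ℕ} (R1 R2 : ℕ → ℝ) (p : Fin N → Bool) : Prop :=
  ∀ i, util R1 R2 (Function.update p i (!(p i))) i ≤ util R1 R2 p i

/-- `R` is strictly increasing on `{1,...,N}`. -/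
def StrictIncrOn (R : ℕ → ℝ) (N : ℕ) : Prop :=
  ∀ m n, 1 ≤ m → m < n → n ≤ N → R m < R n

/-- `R` is constant on `{1,...,N}`. -/
def ConstOn (R : ℕ → ℝ) (N : ℕ) : Prop :=
  ∀ m n, 1 ≤ m → m ≤ N → 1 ≤ n → n ≤ N → R m = R n

/-- The set of pure user Nash equilibria when platforms run algorithms `A1`, `A2`. -/
def userEq (N : ℕ) {𝒜 : Type*} (R : 𝒜 → ℕ → ℝ) (A1 A2 : 𝒜) : Set (Fin N → Bool) :=
  {p | userNash (R A1) (R A2) p}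

/-- Platform 1's utility: minimum number of its users over pure user equilibria. -/
noncomputable def v1 (N : ℕ) {𝒜 : Type*} (R : 𝒜 → ℕ → ℝ) (A1 A2 : 𝒜) : ℕ :=
  sInf (count1 '' userEq N R A1 A2)

/-- Platform 2's utility: minimum number of its users over pure user equilibria. -/
noncomputable def v2 (N : ℕ) {𝒜 : Type*} (R : 𝒜 → ℕ → ℝ) (A1 A2 : 𝒜) : ℕ :=
  sInf (count2 '' userEq N R A1 A2)

/-- `(A1, A2)` is a pure Nash equilibrium of the platform game. -/
def platformNash (N : ℕ) {𝒜 : Type*} (R : 𝒜 → ℕ → ℝ) (A1 A2 : 𝒜) : Prop :=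
  (∀ A, v1 N R A A2 ≤ v1 N R A1 A2) ∧ (∀ A, v2 N R A1 A ≤ v2 N R A1 A2)

/-- User quality level: minimum user utility over pure user equilibria and users. -/
noncomputable def Q (N : ℕ) {𝒜 : Type*} (R : 𝒜 → ℕ → ℝ) (A1 A2 : 𝒜) : ℝ :=
  sInf {u | ∃ p ∈ userEq N R A1 A2, ∃ i, util (R A1) (R A2) p i = u}


section Aux

open Function

lemma count_add {N : ℕ} (p : Fin N → Bool) : count1 p + count2 p = N := by
  classical
  unfold count1 count2
  have h := Finset.card_filter_add_card_filter_not
    (s := (univ : Finset (Fin N))) (p := fun i => p i = false)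
  have h2 : (univ.filter fun i => ¬ p i = false) = (univ.filter fun i => p i = true) := by
    apply Finset.filter_congr
    intro i _
    simp
  rw [h2] at h
  simpa using h

lemma count1_le {N : ℕ} (p : Fin N → Bool) : count1 p ≤ N := by
  have := Finset.card_filter_le (univ : Finset (Fin N)) (fun i => p i = false)
  simpa [count1] using this

lemma count1_update {N : ℕ} (p : Fin N → Bool) (i : Fin N) (h : p i = true) :
    count1 (Function.update p i false) = count1 p + 1 := by
  classical
  unfold count1
  have hset : (univ.filter fun j => Function.update p i false j = false)
      = insert i (univ.filter fun j => p j = false) := by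
    ext j
    by_cases hj : j = i
    · subst hj; simp
    · simp [Function.update_apply, hj]
  rw [hset, Finset.card_insert_of_notMem (by simp [h])]

lemma count2_update {N : ℕ} (p : Fin N → Bool) (i : Fin N) (h : p i = false) :
    count2 (Function.update p i true) = count2 p + 1 := by
  classical
  unfold count2
  have hset : (univ.filter fun j => Function.update p i true j = true)
      = insert i (univ.filter fun j => p j = true) := by
    ext j
    by_cases hj : j = i
    · subst hj; simp
    · simp [Function.update_apply, hj]
  rw [hset, Finset.card_insert_of_notMem (by simp [h])]

lemma count2_pos {N : ℕ} (p : Fin N → Bool) (i : Fin N) (h : p i = true) :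
    1 ≤ count2 p := by
  have : i ∈ (univ.filter fun j => p j = true) := by simp [h]
  have := Finset.card_pos.mpr ⟨i, this⟩
  simpa [count2] using this

lemma count1_const_false {N : ℕ} : count1 (fun _ : Fin N => false) = N := by
  simp [count1]

lemma count1_not {N : ℕ} (p : Fin N → Bool) : count1 (fun i => !p i) = count2 p := by
  unfold count1 count2
  congr 1
  ext j
  simp

lemma count2_not {N : ℕ} (p : Fin N → Bool) : count2 (fun i => !p i) = count1 p := by
  unfold count1 count2
  congr 1
  ext j
  simp

lemma util_not {N : ℕ} (R1 R2 : ℕ → ℝ) (p : Fin N → Bool) (i : Fin N) :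
    util R2 R1 (fun j => !p j) i = util R1 R2 p i := by
  unfold util
  cases h : p i <;> simp [h, count1_not, count2_not]

lemma userNash_not {N : ℕ} (R1 R2 : ℕ → ℝ) (p : Fin N → Bool)
    (hp : userNash R1 R2 p) : userNash R2 R1 (fun j => !p j) := by
  intro i
  have hupd : Function.update (fun j => !p j) i (!(!p i))
      = fun j => !(Function.update p i (!p i) j) := by
    funext j
    by_cases hj : j = i
    · subst hj; simp
    · simp [Function.update_apply, hj]
  rw [hupd, util_not, util_not]
  exact hp i

/-- When platform 1 runs the star algorithm against a dominated `B`, the unique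
user equilibrium is everyone on platform 1. -/
lemma userEq_star {N : ℕ} (hN : 1 ≤ N) {𝒜 : Type*} (R : 𝒜 → ℕ → ℝ)
    (hle : ∀ A m n, 1 ≤ m → m ≤ n → n ≤ N → R A m ≤ R A n)
    (Astar B : 𝒜) (hB : R B N < R Astar 1) :
    userEq N R Astar B = {fun _ => false} := by
  ext p
  simp only [Set.mem_singleton_iff]
  constructor
  · intro hp
    funext i
    by_contra hne
    have hi : p i = true := by
      cases h : p i
      · exact absurd h hne
      · rfl
    have := hp i
    rw [hi] at this
    simp only [util, Bool.not_true, Function.update_self, hi, Bool.false_eq_true,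
      if_false, if_true] at this
    rw [count1_update p i hi] at this
    have hc2 : 1 ≤ count2 p := count2_pos p i hi
    have hadd : count1 p + count2 p = N := count_add p
    have h1 : R Astar 1 ≤ R Astar (count1 p + 1) :=
      hle Astar 1 (count1 p + 1) le_rfl (by omega) (by omega)
    have h2 : R B (count2 p) ≤ R B N :=
      hle B (count2 p) N hc2 (by omega) le_rfl
    linarith
  · rintro rfl
    intro i
    simp only [util, Bool.not_false, Function.update_self, Bool.false_eq_true,
      if_false, if_true]
    rw [count2_update (fun _ => false) i rfl, count1_const_false]
    have h0 : count2 (fun _ : Fin N => false) = 0 := by simp [count2]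
    rw [h0]
    have h1 : R B 1 ≤ R B N := hle B 1 N le_rfl hN le_rfl
    have h2 : R Astar 1 ≤ R Astar N := hle Astar 1 N le_rfl hN le_rfl
    linarith

lemma v1_star {N : ℕ} (hN : 1 ≤ N) {𝒜 : Type*} (R : 𝒜 → ℕ → ℝ)
    (hle : ∀ A m n, 1 ≤ m → m ≤ n → n ≤ N → R A m ≤ R A n)
    (Astar B : 𝒜) (hB : R B N < R Astar 1) :
    v1 N R Astar B = N := by
  rw [v1, userEq_star hN R hle Astar B hB, Set.image_singleton, count1_const_false,
    csInf_singleton]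

lemma v2_star {N : ℕ} (hN : 1 ≤ N) {𝒜 : Type*} (R : 𝒜 → ℕ → ℝ)
    (hle : ∀ A m n, 1 ≤ m → m ≤ n → n ≤ N → R A m ≤ R A n)
    (Astar B : 𝒜) (hB : R B N < R Astar 1) :
    v2 N R B Astar = N := by
  have hstar := userEq_star hN R hle Astar B hB
  have hmemT : (fun _ : Fin N => true) ∈ userEq N R B Astar := by
    have hq : (fun _ : Fin N => false) ∈ userEq N R Astar B := by
      rw [hstar]; rfl
    have := userNash_not _ _ _ hq
    simpa [userEq] using this
  have himg : count2 '' userEq N R B Astar = {N} := by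
    ext n
    simp only [Set.mem_image, Set.mem_singleton_iff]
    constructor
    · rintro ⟨p, hp, rfl⟩
      have hq : (fun j => !p j) ∈ userEq N R Astar B := userNash_not _ _ p hp
      rw [hstar] at hq
      have : count1 (fun j => !p j) = N := by rw [hq]; exact count1_const_false
      rw [count1_not] at this
      exact this
    · intro hn
      subst hn
      exact ⟨_, hmemT, by simp [count2]⟩
  rw [v2, himg, csInf_singleton]

end Aux

/-- if both platforms' algorithms satisfy
`max (R A1 N) (R A2 N) < max_{A} R A 1` (the single-user optimum, attained by `Astar`),
then `(A1, A2)` is not a platform Nash equilibrium. -/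
theorem not_platformNash_of_both_suboptimal (N : ℕ) (hN : 1 ≤ N) {𝒜 : Type*}
    (R : 𝒜 → ℕ → ℝ)
    (hmono : ∀ A, StrictIncrOn (R A) N ∨ ConstOn (R A) N)
    (Astar : 𝒜) (hstar : ∀ A, R A 1 ≤ R Astar 1)
    (A1 A2 : 𝒜) (hlt : max (R A1 N) (R A2 N) < R Astar 1) :
    ¬ platformNash N R A1 A2 := by
  classical
  have hle : ∀ A m n, 1 ≤ m → m ≤ n → n ≤ N → R A m ≤ R A n := by
    intro A m n hm hmn hn
    rcases hmono A with h | h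
    · rcases eq_or_lt_of_le hmn with rfl | h'
      · exact le_rfl
      · exact (h m n hm h' hn).le
    · exact (h m n hm (le_trans hmn hn) (le_trans hm hmn) hn).le
  have h1N : R A1 N < R Astar 1 := lt_of_le_of_lt (le_max_left _ _) hlt
  have h2N : R A2 N < R Astar 1 := lt_of_le_of_lt (le_max_right _ _) hlt
  rintro ⟨hp1, hp2⟩
  have hv1 : v1 N R Astar A2 = N := v1_star hN R hle Astar A2 h2N
  have hge : N ≤ v1 N R A1 A2 := by have h := hp1 Astar; omega
  have hne : (count1 '' userEq N R A1 A2).Nonempty := by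
    by_contra h
    rw [Set.not_nonempty_iff_eq_empty] at h
    have : v1 N R A1 A2 = 0 := by rw [v1, h]; exact Nat.sInf_empty
    omega
  obtain ⟨p, hpEq, hpc⟩ := Nat.sInf_mem hne
  have hc1 : count1 p = N := by
    have h1 := count1_le p
    have : v1 N R A1 A2 = sInf (count1 '' userEq N R A1 A2) := rfl
    omega
  have hc2 : count2 p = 0 := by have := count_add p; omega
  have h0 : (0 : ℕ) ∈ count2 '' userEq N R A1 A2 := ⟨p, hpEq, hc2⟩
  have hz : v2 N R A1 A2 = 0 := Nat.eq_zero_of_le_zero (Nat.sInf_le h0)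
  have hv2 : v2 N R A1 Astar = N := v2_star hN R hle Astar A1 h1N
  have := hp2 Astar
  omega
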